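/- arXiv:2307.16234 — 6 statements merged into one kernel-verified Lean document; each statement's English description precedes it below -/
import Mathlib

section
/- If x ∈ 𝓞_K satisfies |N(x)| = p for a prime number p with p ≠ λ, then p ≡ 1 (mod λ), i.e., λ divides p − 1. -/
open NumberField

noncomputable instance (n : ℕ+) : NumberField (CyclotomicField n ℚ) :=
  @IsCyclotomicExtension.numberField {(n : ℕ)} ℚ (CyclotomicField n ℚ) _ _
    (CyclotomicField.algebra _ _) _ _ _

set_option synthInstance.maxHeartbeats 1000000 in
set_option maxHeartbeats 1000000 in
/-- If a cyclotomic integer in the `λ`-th cyclotomic field has norm of absolute value a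
prime `p ≠ λ`, then `λ` divides `p - 1`, i.e. `p ≡ 1 (mod λ)`. -/
theorem prime_norm_cyclotomic_congr_one (l : ℕ+) (hl : (l : ℕ).Prime)
    (p : ℕ) (hp : p.Prime) (hpl : p ≠ (l : ℕ))
    (x : 𝓞 (CyclotomicField l ℚ))
    (hx : (Algebra.norm ℤ x).natAbs = p) :
    (l : ℕ) ∣ p - 1 := by
  -- Case l = 2 : p is odd, so 2 ∣ p - 1
  by_cases hl2 : (l : ℕ) = 2
  · have hp2 : p ≠ 2 := fun h => hpl (hl2 ▸ h ▸ rfl)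
    obtain ⟨k, hk⟩ := hp.odd_of_ne_two hp2
    rw [hl2]
    omega
  haveI : Fact (l : ℕ).Prime := ⟨hl⟩
  haveI : NeZero ((l : ℕ) : ℚ) := ⟨by exact_mod_cast hl.ne_zero⟩
  haveI : IsCyclotomicExtension {(l : ℕ)} ℚ (CyclotomicField l ℚ) :=
    CyclotomicField.isCyclotomicExtension (l : ℕ) ℚ
  set K := CyclotomicField l ℚ
  have hζ := IsCyclotomicExtension.zeta_spec l ℚ K
  set η : 𝓞 K := hζ.toInteger with hη
  set P : Ideal (𝓞 K) := Ideal.span {x} with hP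
  have habs : Ideal.absNorm P = p := by
    rw [hP, Ideal.absNorm_span_singleton, hx]
  have hPprime : P.IsPrime :=
    Ideal.isPrime_of_irreducible_absNorm (by rw [habs]; exact hp.prime.irreducible)
  have hxne : x ≠ 0 := by
    rintro rfl
    rw [Algebra.norm_zero, Int.natAbs_zero] at hx
    exact hp.ne_zero hx.symm
  have hPne : P ≠ ⊥ := by
    rw [hP, Ne, Ideal.span_singleton_eq_bot]
    exact hxne
  haveI hPmax : P.IsMaximal := hPprime.isMaximal hPne
  letI : Field (𝓞 K ⧸ P) := Ideal.Quotient.field P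
  have hcardF : Nat.card (𝓞 K ⧸ P) = p := by
    rw [← habs, Ideal.absNorm_apply, Submodule.cardQuot_apply]
  haveI : Finite (𝓞 K ⧸ P) := Nat.finite_of_card_ne_zero (by rw [hcardF]; exact hp.ne_zero)
  -- the image of ζ in the residue field
  set z : 𝓞 K ⧸ P := Ideal.Quotient.mk P η with hz
  have hzpow : z ^ (l : ℕ) = 1 := by
    rw [hz, ← map_pow, ← map_one (Ideal.Quotient.mk P)]
    congr 1
    exact_mod_cast hζ.toInteger_isPrimitiveRoot.pow_eq_one
  have hzne1 : z ≠ 1 := by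
    intro h
    have hmem : η - 1 ∈ P := by
      rw [← Ideal.Quotient.eq_zero_iff_mem, map_sub, map_one, ← hz, h, sub_self]
    rw [hP, Ideal.mem_span_singleton] at hmem
    have hdvd : Algebra.norm ℤ x ∣ Algebra.norm ℤ (η - 1) := map_dvd _ hmem
    rw [hζ.norm_toInteger_sub_one_of_prime_ne_two' (fun h2 ↦ hl2 (by exact_mod_cast h2))] at hdvd
    have : p ∣ (l : ℕ) := by
      have := Int.natAbs_dvd_natAbs.mpr hdvd
      rwa [hx, Int.natAbs_natCast] at this
    exact hpl ((Nat.prime_dvd_prime_iff_eq hp hl).mp this)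
  have horder : orderOf z = (l : ℕ) := by
    have hdvd : orderOf z ∣ (l : ℕ) := orderOf_dvd_of_pow_eq_one hzpow
    rcases (Nat.dvd_prime hl).mp hdvd with h1 | h
    · exact absurd (orderOf_eq_one_iff.mp h1) hzne1
    · exact h
  -- z is a unit; its order divides the order of the unit group, which is p - 1
  have hzne0 : z ≠ 0 := by
    intro h
    rw [h, zero_pow (by exact_mod_cast hl.ne_zero)] at hzpow
    exact zero_ne_one hzpow
  have hzu : IsUnit z := IsUnit.of_pow_eq_one hzpow (by exact_mod_cast hl.ne_zero)
  lift z to (𝓞 K ⧸ P)ˣ using hzu with u hu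
  rw [orderOf_units] at horder
  have hdvd : orderOf u ∣ Nat.card (𝓞 K ⧸ P)ˣ := orderOf_dvd_natCard u
  have hcardU := Nat.card_units (𝓞 K ⧸ P)
  rw [hcardF] at hcardU
  rw [← horder]
  exact hcardU ▸ hdvd
end

section
/- If x ∈ 𝓞_K satisfies |N(x)| = p for a prime number p, then there exists an integer ξ ∈ ℤ such that x divides ζ − ξ in 𝓞_K. -/
open NumberField

set_option maxHeartbeats 1000000 in
set_option synthInstance.maxHeartbeats 200000 in
/-- If a cyclotomic integer `x` has norm of prime absolute value `p`, then there is an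
ordinary integer `ξ` such that `x` divides `ζ - ξ` in the ring of integers. -/
theorem exists_int_dvd_zeta_sub (l : ℕ+) (hl : (l : ℕ).Prime)
    (ζ : 𝓞 (CyclotomicField l ℚ)) (hζ : IsPrimitiveRoot ζ l)
    (p : ℕ) (hp : p.Prime)
    (x : 𝓞 (CyclotomicField l ℚ))
    (hx : (Algebra.norm ℤ x).natAbs = p) :
    ∃ ξ : ℤ, x ∣ ζ - (ξ : 𝓞 (CyclotomicField l ℚ)) := by
  have hxne : x ≠ 0 := by
    intro h
    rw [h, Algebra.norm_zero, Int.natAbs_zero] at hx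
    exact hp.ne_zero hx.symm
  have hIne : (Ideal.span {x} : Ideal (𝓞 (CyclotomicField l ℚ))) ≠ ⊥ := by
    simpa [Ideal.span_singleton_eq_bot] using hxne
  have : Fintype (𝓞 (CyclotomicField l ℚ) ⧸ Ideal.span {x}) :=
    have := Ideal.finiteQuotientOfFreeOfNeBot _ hIne; Fintype.ofFinite _
  have hcard : Fintype.card (𝓞 (CyclotomicField l ℚ) ⧸ Ideal.span {x}) = p := by
    rw [← Nat.card_eq_fintype_card, ← Submodule.cardQuot_apply, ← Ideal.absNorm_apply,
      Ideal.absNorm_span_singleton]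
    exact hx
  let e := ZMod.ringEquivOfPrime _ hp hcard
  set q := Ideal.Quotient.mk (Ideal.span {x}) ζ with hq
  refine ⟨((e.symm q).val : ℤ), ?_⟩
  rw [← Ideal.mem_span_singleton, ← Ideal.Quotient.eq_zero_iff_mem]
  have h2 : q = (((e.symm q).val : ℤ) : 𝓞 (CyclotomicField l ℚ) ⧸ Ideal.span {x}) := by
    conv_lhs => rw [← e.apply_symm_apply q]
    rw [← map_intCast e (((e.symm q).val : ℤ))]
    congr 1
    haveI : NeZero p := ⟨hp.ne_zero⟩
    push_cast [ZMod.natCast_val, ZMod.intCast_cast]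
    exact (ZMod.cast_id _ _).symm
  rw [map_sub, map_intCast, ← hq, sub_eq_zero]
  exact h2
end

section
/- For any two units c, d ∈ (ℤ/λℤ)ˣ, the product of Gauss periods η_c · η_d lies in the ℤ-submodule of K spanned by 1 together with all the periods η_{c'}, c' ∈ (ℤ/λℤ)ˣ. In particular, the ℤ-span of 1 and the periods is a subring of K. -/
open scoped BigOperators

/-- The Gauss period `η_c = ∑_{h ∈ H} ζ^(c·h)` attached to a unit `c` modulo `λ`. -/
noncomputable def gaussPeriod (l : ℕ+) (ζ : CyclotomicField l ℚ)
    (H : Subgroup (ZMod (l : ℕ))ˣ) [Fintype H] (c : (ZMod (l : ℕ))ˣ) :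
    CyclotomicField l ℚ :=
  ∑ h : H, ζ ^ (((c * (h : (ZMod (l : ℕ))ˣ) : (ZMod (l : ℕ))ˣ) : ZMod (l : ℕ)).val)

/-- The product of two Gauss periods lies in the `ℤ`-span of `1` and the periods; in
particular this span is a subring of the cyclotomic field. -/
theorem gaussPeriod_mul_mem_span (l : ℕ+) (hl : (l : ℕ).Prime)
    (ζ : CyclotomicField l ℚ) (hζ : IsPrimitiveRoot ζ l)
    (H : Subgroup (ZMod (l : ℕ))ˣ) [Fintype H] (f : ℕ) (hf : Fintype.card H = f) :
    (∀ c d : (ZMod (l : ℕ))ˣ,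
        gaussPeriod l ζ H c * gaussPeriod l ζ H d ∈
          Submodule.span ℤ
            (insert (1 : CyclotomicField l ℚ) (Set.range (gaussPeriod l ζ H)))) ∧
      ∃ S : Subring (CyclotomicField l ℚ),
        (S : Set (CyclotomicField l ℚ)) =
          (Submodule.span ℤ
            (insert (1 : CyclotomicField l ℚ) (Set.range (gaussPeriod l ζ H))) :
              Submodule ℤ (CyclotomicField l ℚ)) := by
  haveI : Fact ((l : ℕ).Prime) := ⟨hl⟩
  haveI : NeZero (l : ℕ) := ⟨l.ne_zero⟩
  set Sgen : Set (CyclotomicField l ℚ) :=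
    insert (1 : CyclotomicField l ℚ) (Set.range (gaussPeriod l ζ H)) with hSgen
  set p : Submodule ℤ (CyclotomicField l ℚ) := Submodule.span ℤ Sgen with hp
  have hone : (1 : CyclotomicField l ℚ) ∈ p :=
    Submodule.subset_span (Set.mem_insert _ _)
  -- ζ^a.val * ζ^b.val = ζ^(a+b).val
  have hpow : ∀ a b : ZMod (l : ℕ), ζ ^ (a + b).val = ζ ^ a.val * ζ ^ b.val := by
    intro a b
    rw [← pow_add, ZMod.val_add]
    conv_rhs => rw [← Nat.mod_add_div (a.val + b.val) (l : ℕ), pow_add, pow_mul,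
      hζ.pow_eq_one, one_pow, mul_one]
  -- inner sum over H of ζ^((u*h).val) is in the span, for any u : ZMod l
  have hinner : ∀ u : ZMod (l : ℕ), (∑ h : H, ζ ^ ((u * (h : (ZMod (l:ℕ))ˣ) : ZMod (l:ℕ)).val)) ∈ p := by
    intro u
    rcases eq_or_ne u 0 with h0 | h0
    · have : (∑ h : H, ζ ^ ((u * (h : (ZMod (l:ℕ))ˣ) : ZMod (l:ℕ)).val))
          = (Fintype.card H : ℤ) • (1 : CyclotomicField l ℚ) := by
        simp [h0, ZMod.val_zero]
      rw [this]
      exact p.smul_mem _ hone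
    · obtain ⟨u', hu'⟩ := (isUnit_iff_ne_zero.mpr h0)
      have : (∑ h : H, ζ ^ ((u * (h : (ZMod (l:ℕ))ˣ) : ZMod (l:ℕ)).val))
          = gaussPeriod l ζ H u' := by
        unfold gaussPeriod
        refine Finset.sum_congr rfl fun h _ => ?_
        rw [Units.val_mul, hu']
      rw [this]
      exact Submodule.subset_span (Set.mem_insert_of_mem _ ⟨u', rfl⟩)
  have key : ∀ c d : (ZMod (l : ℕ))ˣ,
      gaussPeriod l ζ H c * gaussPeriod l ζ H d ∈ p := by
    intro c d
    unfold gaussPeriod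
    rw [Finset.sum_mul_sum]
    have step : ∀ h : H,
        (∑ k : H, ζ ^ ((c * (h:(ZMod (l:ℕ))ˣ) : (ZMod (l:ℕ))ˣ) : ZMod (l:ℕ)).val *
          ζ ^ ((d * (k:(ZMod (l:ℕ))ˣ) : (ZMod (l:ℕ))ˣ) : ZMod (l:ℕ)).val)
        = ∑ m : H, ζ ^ ((((c:ZMod (l:ℕ)) + (d:ZMod (l:ℕ)) * ((m:(ZMod (l:ℕ))ˣ):ZMod (l:ℕ))) * ((h:(ZMod (l:ℕ))ˣ):ZMod (l:ℕ))).val) := by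
      intro h
      rw [← Equiv.sum_comp (Equiv.mulLeft h)]
      refine Finset.sum_congr rfl fun m _ => ?_
      rw [← hpow]
      congr 1
      simp only [Equiv.coe_mulLeft]
      push_cast
      ring
    rw [Finset.sum_congr rfl fun h _ => step h, Finset.sum_comm]
    exact Submodule.sum_mem _ fun m _ => hinner _
  refine ⟨key, ?_⟩
  have hmul : ∀ x y : CyclotomicField l ℚ, x ∈ p → y ∈ p → x * y ∈ p := by
    have hle : p * p ≤ p := by
      rw [hp, Submodule.span_mul_span]
      refine Submodule.span_le.mpr ?_
      rintro z ⟨x, hx, y, hy, rfl⟩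
      rcases hx with rfl | ⟨c, rfl⟩
      · simpa using Submodule.subset_span hy
      · rcases hy with rfl | ⟨d, rfl⟩
        · simpa using Submodule.subset_span (Set.mem_insert_of_mem _ (Set.mem_range_self c))
        · simpa using key c d
    intro x y hx hy
    exact hle (Submodule.mul_mem_mul hx hy)
  exact ⟨{ carrier := p
           mul_mem' := fun hx hy => hmul _ _ hx hy
           one_mem' := hone
           add_mem' := fun hx hy => p.add_mem hx hy
           zero_mem' := p.zero_mem
           neg_mem' := fun hx => p.neg_mem hx }, rfl⟩
end

section
/- Let η = η₁ = Σ_{h ∈ H} ζ^h be the Gauss period of the identity coset. Then every Gauss period η_c, for c ∈ (ℤ/λℤ)ˣ, lies in the intermediate field ℚ(η) generated over ℚ by η inside K. -/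
open scoped BigOperators

section Aux

variable (l : ℕ+) (ζ : CyclotomicField l ℚ) (H : Subgroup (ZMod (l : ℕ))ˣ) [Fintype H]

lemma gp_pow_mod (hζ : IsPrimitiveRoot ζ l) (n : ℕ) : ζ ^ (n % (l : ℕ)) = ζ ^ n := by
  conv_rhs => rw [← Nat.mod_add_div n (l : ℕ)]
  rw [pow_add, pow_mul, hζ.pow_eq_one, one_pow, mul_one]

lemma gp_aut (hζ : IsPrimitiveRoot ζ l)
    (σ : CyclotomicField l ℚ ≃ₐ[ℚ] CyclotomicField l ℚ) (c : (ZMod (l : ℕ))ˣ) :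
    haveI : NeZero (l : ℕ) := ⟨l.pos.ne'⟩
    σ (gaussPeriod l ζ H c) = gaussPeriod l ζ H (hζ.autToPow ℚ σ * c) := by
  haveI : NeZero (l : ℕ) := ⟨l.pos.ne'⟩
  unfold gaussPeriod
  rw [map_sum]
  refine Finset.sum_congr rfl fun h _ => ?_
  have h1 : ((hζ.autToPow ℚ σ * c * (h : (ZMod (l : ℕ))ˣ) : (ZMod (l : ℕ))ˣ) : ZMod (l : ℕ))
      = ((hζ.autToPow ℚ σ : (ZMod (l : ℕ))ˣ) : ZMod (l : ℕ))
        * ((c * (h : (ZMod (l : ℕ))ˣ) : (ZMod (l : ℕ))ˣ) : ZMod (l : ℕ)) := by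
    push_cast [mul_assoc]
    ring
  rw [map_pow, ← hζ.autToPow_spec ℚ σ, ← pow_mul, h1, ZMod.val_mul, gp_pow_mod l ζ hζ]

lemma gp_shift {u : (ZMod (l : ℕ))ˣ} (hu : u ∈ H) (c : (ZMod (l : ℕ))ˣ) :
    gaussPeriod l ζ H (u * c) = gaussPeriod l ζ H c := by
  unfold gaussPeriod
  refine Fintype.sum_equiv (Equiv.mulLeft (⟨u, hu⟩ : H)) _ _ fun x => ?_
  congr 2
  simp only [Equiv.coe_mulLeft]
  push_cast
  ring

lemma gp_inj (hl : (l : ℕ).Prime) (hζ : IsPrimitiveRoot ζ l) {u : (ZMod (l : ℕ))ˣ}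
    (h : gaussPeriod l ζ H u = gaussPeriod l ζ H 1) : u ∈ H := by
  haveI : NeZero (l : ℕ) := ⟨l.pos.ne'⟩
  haveI : Fact (1 < (l : ℕ)) := ⟨hl.one_lt⟩
  haveI : IsCyclotomicExtension {(l : ℕ)} ℚ (CyclotomicField l ℚ) :=
    CyclotomicField.isCyclotomicExtension _ _
  classical
  set d := (hζ.powerBasis ℚ).dim with hd
  have hz : ζ ≠ 0 := fun h0 => by
    have h1 := hζ.pow_eq_one
    rw [h0, zero_pow l.pos.ne'] at h1
    exact zero_ne_one h1
  have hdim : d = (l : ℕ) - 1 := by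
    have h1 : Module.finrank ℚ (CyclotomicField l ℚ) = ((l : ℕ)).totient :=
      IsCyclotomicExtension.finrank (CyclotomicField l ℚ) (Polynomial.cyclotomic.irreducible_rat l.pos)
    have h2 := (hζ.powerBasis ℚ).finrank
    rw [h1, Nat.totient_prime hl] at h2
    exact h2.symm
  have li0 : LinearIndependent ℚ fun i : Fin d => ζ ^ (i : ℕ) := by
    have h1 := (hζ.powerBasis ℚ).basis.linearIndependent
    have h2 : (fun i : Fin d => ζ ^ (i : ℕ)) = (hζ.powerBasis ℚ).basis := by
      funext i
      rw [(hζ.powerBasis ℚ).basis_eq_pow, IsPrimitiveRoot.powerBasis_gen]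
    rw [h2]
    exact h1
  have li : LinearIndependent ℚ fun i : Fin d => ζ ^ ((i : ℕ) + 1) := by
    have hker : LinearMap.ker (LinearMap.mulLeft ℚ ζ) = ⊥ :=
      LinearMap.ker_eq_bot.mpr (mul_right_injective₀ hz)
    have := li0.map' (LinearMap.mulLeft ℚ ζ) hker
    convert this using 1
    funext i
    simp [Function.comp, pow_succ, mul_comm]
    all_goals rfl
  have hvne : ∀ x : (ZMod (l : ℕ))ˣ, ((x : ZMod (l : ℕ))).val ≠ 0 := fun x => by
    simp [ZMod.val_eq_zero, x.ne_zero]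
  have hval : ∀ x : (ZMod (l : ℕ))ˣ, ((x : ZMod (l : ℕ))).val - 1 < d := fun x => by
    have h1 : ((x : ZMod (l : ℕ))).val < (l : ℕ) := ZMod.val_lt _
    have h2 := hvne x
    have h3 := hl.one_lt
    omega
  set φ : (ZMod (l : ℕ))ˣ → H → Fin d := fun a h =>
    ⟨((a * (h : (ZMod (l : ℕ))ˣ) : (ZMod (l : ℕ))ˣ) : ZMod (l : ℕ)).val - 1, hval _⟩ with hφ
  have hφval : ∀ (a : (ZMod (l : ℕ))ˣ) (h : H),
      ((φ a h : ℕ)) + 1 = ((a * (h : (ZMod (l : ℕ))ˣ) : (ZMod (l : ℕ))ˣ) : ZMod (l : ℕ)).val := by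
    intro a h
    have := hvne (a * (h : (ZMod (l : ℕ))ˣ))
    simp only [hφ]
    omega
  have hφinj : ∀ a, Function.Injective (φ a) := by
    intro a h1 h2 he
    have hv1 := hvne (a * (h1 : (ZMod (l : ℕ))ˣ))
    have hv2 := hvne (a * (h2 : (ZMod (l : ℕ))ˣ))
    have he' : ((a * (h1 : (ZMod (l : ℕ))ˣ) : (ZMod (l : ℕ))ˣ) : ZMod (l : ℕ)).val
        = ((a * (h2 : (ZMod (l : ℕ))ˣ) : (ZMod (l : ℕ))ˣ) : ZMod (l : ℕ)).val := by
      have := Fin.mk.injEq _ _ _ _ ▸ he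
      simp only [hφ, Fin.mk.injEq] at he
      omega
    have he2 : (a * (h1 : (ZMod (l : ℕ))ˣ) : (ZMod (l : ℕ))ˣ)
        = (a * (h2 : (ZMod (l : ℕ))ˣ) : (ZMod (l : ℕ))ˣ) :=
      Units.ext (ZMod.val_injective _ he')
    exact Subtype.ext (mul_left_cancel he2)
  have hsum : ∀ a : (ZMod (l : ℕ))ˣ, gaussPeriod l ζ H a
      = ∑ i : Fin d, (if i ∈ Finset.image (φ a) Finset.univ then (1 : ℚ) else 0)
          • ζ ^ ((i : ℕ) + 1) := by
    intro a
    rw [Finset.sum_congr rfl (fun i _ => by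
        rw [ite_smul, show (1 : ℚ) • ζ ^ ((i : ℕ) + 1) = ζ ^ ((i : ℕ) + 1) from one_smul _ _,
          show (0 : ℚ) • ζ ^ ((i : ℕ) + 1) = 0 from zero_smul _ _]),
      Finset.sum_ite_mem, Finset.univ_inter,
      Finset.sum_image (fun x _ y _ hxy => hφinj a hxy)]
    unfold gaussPeriod
    exact Finset.sum_congr rfl fun x _ => by rw [hφval]
  have key : ∀ i : Fin d,
      ((if i ∈ Finset.image (φ u) Finset.univ then (1 : ℚ) else 0)
        - (if i ∈ Finset.image (φ 1) Finset.univ then (1 : ℚ) else 0)) = 0 := by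
    have h0 : ∑ i : Fin d,
        ((if i ∈ Finset.image (φ u) Finset.univ then (1 : ℚ) else 0)
          - (if i ∈ Finset.image (φ 1) Finset.univ then (1 : ℚ) else 0))
          • ζ ^ ((i : ℕ) + 1) = 0 := by
      simp only [show ∀ (a b : ℚ) (x : CyclotomicField l ℚ), (a - b) • x = a • x - b • x from
        fun a b x => sub_smul a b x, Finset.sum_sub_distrib]
      rw [← hsum u, ← hsum 1, h, sub_self]
    exact fun i => Fintype.linearIndependent_iff.mp li _ h0 i
  have h1 : (φ u ⟨1, H.one_mem⟩) ∈ Finset.image (φ u) Finset.univ :=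
    Finset.mem_image_of_mem _ (Finset.mem_univ _)
  have h2 : (φ u ⟨1, H.one_mem⟩) ∈ Finset.image (φ 1) Finset.univ := by
    by_contra hc
    have := key (φ u ⟨1, H.one_mem⟩)
    rw [if_pos h1, if_neg hc, sub_zero] at this
    exact one_ne_zero this
  obtain ⟨h0, -, hh⟩ := Finset.mem_image.mp h2
  have he : ((1 * (h0 : (ZMod (l : ℕ))ˣ) : (ZMod (l : ℕ))ˣ) : ZMod (l : ℕ)).val
      = ((u * ((⟨1, H.one_mem⟩ : H) : (ZMod (l : ℕ))ˣ) : (ZMod (l : ℕ))ˣ) : ZMod (l : ℕ)).val := by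
    rw [← hφval 1 h0, ← hφval u ⟨1, H.one_mem⟩, hh]
  have he2 : ((h0 : (ZMod (l : ℕ))ˣ) : ZMod (l : ℕ)) = ((u : (ZMod (l : ℕ))ˣ) : ZMod (l : ℕ)) := by
    have := ZMod.val_injective _ he
    simpa using this
  have : (h0 : (ZMod (l : ℕ))ˣ) = u := Units.ext he2
  exact this ▸ h0.2

end Aux

/-- Every Gauss period lies in the subfield `ℚ(η)` generated by the period `η = η₁`
of the identity coset. -/
theorem gaussPeriod_mem_adjoin (l : ℕ+) (hl : (l : ℕ).Prime)
    (ζ : CyclotomicField l ℚ) (hζ : IsPrimitiveRoot ζ l)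
    (H : Subgroup (ZMod (l : ℕ))ˣ) [Fintype H] (f : ℕ) (hf : Fintype.card H = f)
    (c : (ZMod (l : ℕ))ˣ) :
    gaussPeriod l ζ H c ∈ IntermediateField.adjoin ℚ {gaussPeriod l ζ H 1} := by
  haveI : NeZero (l : ℕ) := ⟨l.pos.ne'⟩
  haveI : IsCyclotomicExtension {(l : ℕ)} ℚ (CyclotomicField l ℚ) :=
    CyclotomicField.isCyclotomicExtension _ _
  haveI : IsGalois ℚ (CyclotomicField l ℚ) := IsCyclotomicExtension.isGalois {(l : ℕ)} ℚ _
  haveI : FiniteDimensional ℚ (CyclotomicField l ℚ) :=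
    IsCyclotomicExtension.finiteDimensional {(l : ℕ)} ℚ _
  rw [← IsGalois.fixedField_fixingSubgroup (IntermediateField.adjoin ℚ {gaussPeriod l ζ H 1})]
  intro σ
  have hσ : (σ : CyclotomicField l ℚ ≃ₐ[ℚ] CyclotomicField l ℚ) (gaussPeriod l ζ H 1)
      = gaussPeriod l ζ H 1 := by
    have := σ.2
    rw [IntermediateField.mem_fixingSubgroup_iff] at this
    exact this _ (IntermediateField.mem_adjoin_simple_self ℚ _)
  set u := hζ.autToPow ℚ (σ : CyclotomicField l ℚ ≃ₐ[ℚ] CyclotomicField l ℚ) with hu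
  have huH : u ∈ H := by
    refine gp_inj l ζ H hl hζ ?_
    rw [← hσ, gp_aut l ζ H hζ, mul_one]
  show (σ : CyclotomicField l ℚ ≃ₐ[ℚ] CyclotomicField l ℚ) (gaussPeriod l ζ H c)
      = gaussPeriod l ζ H c
  rw [gp_aut l ζ H hζ, ← hu, gp_shift l ζ H huH]
end

section
/- Let η = η₁ = Σ_{h ∈ H} ζ^h be the Gauss period of the identity coset, where H has order f and e = (λ−1)/f. Then the degree of the field extension [ℚ(η) : ℚ] equals e; equivalently, the minimal polynomial of η over ℚ has degree e. -/
open scoped BigOperators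

section Aux

variable {l : ℕ+} {ζ : CyclotomicField l ℚ} {H : Subgroup (ZMod (l : ℕ))ˣ} [Fintype H]

lemma zeta_pow_val_mul (hζ : IsPrimitiveRoot ζ l) (a b : ZMod (l : ℕ)) :
    ζ ^ (a * b).val = ζ ^ (a.val * b.val) := by
  haveI : NeZero ((l : ℕ)) := ⟨l.ne_zero⟩
  rw [ZMod.val_mul]
  have h : ζ ^ ((a.val * b.val) % orderOf ζ) = ζ ^ (a.val * b.val) :=
    pow_mod_orderOf ζ _
  rw [← hζ.eq_orderOf] at h
  exact h

lemma gaussPeriod_aut (hζ : IsPrimitiveRoot ζ l)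
    (σ : CyclotomicField l ℚ ≃ₐ[ℚ] CyclotomicField l ℚ) (c : (ZMod (l : ℕ))ˣ) :
    σ (gaussPeriod l ζ H c) = gaussPeriod l ζ H (hζ.autToPow ℚ σ * c) := by
  haveI : NeZero ((l : ℕ)) := ⟨l.ne_zero⟩
  unfold gaussPeriod
  rw [map_sum]
  refine Finset.sum_congr rfl fun h _ => ?_
  rw [map_pow, ← hζ.autToPow_spec ℚ σ, ← pow_mul, mul_assoc]
  conv_rhs => rw [Units.val_mul, zeta_pow_val_mul hζ]

lemma gaussPeriod_eq_one_of_mem {c : (ZMod (l : ℕ))ˣ} (hc : c ∈ H) :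
    gaussPeriod l ζ H c = gaussPeriod l ζ H 1 := by
  unfold gaussPeriod
  refine Fintype.sum_equiv (Equiv.mulLeft (⟨c, hc⟩ : H)) _ _ fun h => ?_
  simp only [Equiv.coe_mulLeft, one_mul, MulMemClass.coe_mul]

lemma gauss_linearIndependent (hl : (l : ℕ).Prime) (hζ : IsPrimitiveRoot ζ l) :
    LinearIndependent ℚ
      (fun u : (ZMod (l : ℕ))ˣ => ζ ^ ((u : ZMod (l : ℕ))).val) := by
  haveI : NeZero ((l : ℕ)) := ⟨l.ne_zero⟩
  haveI := Fact.mk hl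
  haveI : IsCyclotomicExtension {(l : ℕ)} ℚ (CyclotomicField l ℚ) :=
    CyclotomicField.isCyclotomicExtension _ _
  set pb := hζ.powerBasis ℚ with hpb
  have hdim : pb.dim = (l : ℕ) - 1 := by
    rw [← pb.finrank, IsCyclotomicExtension.finrank (CyclotomicField l ℚ)
      (Polynomial.cyclotomic.irreducible_rat l.pos), Nat.totient_prime hl]
  have hzne : ζ ≠ 0 := hζ.ne_zero l.ne_zero
  have li0 : LinearIndependent ℚ (fun i : Fin pb.dim => ζ ^ (i : ℕ)) := by
    have := pb.basis.linearIndependent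
    rwa [pb.coe_basis, hζ.powerBasis_gen ℚ] at this
  have li1 : LinearIndependent ℚ (fun i : Fin pb.dim => ζ * ζ ^ (i : ℕ)) := by
    have hker : LinearMap.ker (LinearMap.mulLeft ℚ ζ) = ⊥ := by
      rw [LinearMap.ker_eq_bot]
      intro x y hxy
      exact mul_left_cancel₀ hzne hxy
    exact li0.map' (LinearMap.mulLeft ℚ ζ) hker
  have hval1 : ∀ u : (ZMod (l : ℕ))ˣ, 1 ≤ ((u : ZMod (l : ℕ))).val := by
    intro u
    rcases Nat.eq_zero_or_pos ((u : ZMod (l : ℕ))).val with h | h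
    · exact absurd ((ZMod.val_eq_zero _).mp h) u.ne_zero
    · exact h
  have hvlt : ∀ u : (ZMod (l : ℕ))ˣ, ((u : ZMod (l : ℕ))).val < (l : ℕ) :=
    fun u => ZMod.val_lt _
  have h2l : 2 ≤ (l : ℕ) := hl.two_le
  set emb : (ZMod (l : ℕ))ˣ → Fin pb.dim := fun u =>
    ⟨((u : ZMod (l : ℕ))).val - 1, by
      have := hval1 u; have := hvlt u; omega⟩ with hemb
  have hinj : Function.Injective emb := by
    intro u v huv
    have h1 := hval1 u; have h2 := hval1 v
    have : ((u : ZMod (l : ℕ))).val - 1 = ((v : ZMod (l : ℕ))).val - 1 :=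
      congrArg Fin.val huv
    have hval : ((u : ZMod (l : ℕ))).val = ((v : ZMod (l : ℕ))).val := by omega
    exact Units.ext (ZMod.val_injective _ hval)
  have heq : (fun u : (ZMod (l : ℕ))ˣ => ζ ^ ((u : ZMod (l : ℕ))).val)
      = (fun i : Fin pb.dim => ζ * ζ ^ (i : ℕ)) ∘ emb := by
    funext u
    simp only [Function.comp, hemb]
    have h1 := hval1 u
    rw [← pow_succ']
    congr 1
    omega
  rw [heq]
  exact li1.comp emb hinj

lemma mem_of_gaussPeriod_eq (hl : (l : ℕ).Prime) (hζ : IsPrimitiveRoot ζ l)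
    {c : (ZMod (l : ℕ))ˣ} (hc : gaussPeriod l ζ H c = gaussPeriod l ζ H 1) :
    c ∈ H := by
  classical
  haveI := Fact.mk hl
  by_contra hcH
  set g : (ZMod (l : ℕ))ˣ → CyclotomicField l ℚ :=
    fun u => ζ ^ ((u : ZMod (l : ℕ))).val with hg
  set A : Finset (ZMod (l : ℕ))ˣ :=
    Finset.univ.image (fun h : H => c * (h : (ZMod (l : ℕ))ˣ)) with hA
  set B : Finset (ZMod (l : ℕ))ˣ :=
    Finset.univ.image (fun h : H => (h : (ZMod (l : ℕ))ˣ)) with hB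
  have hinjA : Function.Injective (fun h : H => c * (h : (ZMod (l : ℕ))ˣ)) :=
    fun x y hxy => Subtype.ext (mul_left_cancel hxy)
  have hinjB : Function.Injective (fun h : H => (h : (ZMod (l : ℕ))ˣ)) :=
    fun x y hxy => Subtype.ext hxy
  have hsumA : ∑ u ∈ A, g u = gaussPeriod l ζ H c := by
    rw [hA, Finset.sum_image (fun x _ y _ h => hinjA h)]
    rfl
  have hsumB : ∑ u ∈ B, g u = gaussPeriod l ζ H 1 := by
    rw [hB, Finset.sum_image (fun x _ y _ h => hinjB h)]
    unfold gaussPeriod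
    simp [hg]
  have hdisj : Disjoint A B := by
    rw [Finset.disjoint_left]
    rintro u hu hv
    simp only [hA, hB, Finset.mem_image, Finset.mem_univ, true_and] at hu hv
    obtain ⟨h1, rfl⟩ := hu
    obtain ⟨h2, hEq⟩ := hv
    apply hcH
    have hceq : c = (h2 : (ZMod (l : ℕ))ˣ) * ((h1 : (ZMod (l : ℕ))ˣ))⁻¹ := by
      rw [eq_mul_inv_iff_mul_eq]
      exact hEq.symm
    rw [hceq]
    exact H.mul_mem h2.2 (H.inv_mem h1.2)
  have hcA : c ∈ A := by
    simp only [hA, Finset.mem_image, Finset.mem_univ, true_and]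
    exact ⟨1, by simp⟩
  have hcB : c ∉ B := by
    intro hmem
    simp only [hB, Finset.mem_image, Finset.mem_univ, true_and] at hmem
    obtain ⟨h1, hEq⟩ := hmem
    exact hcH (hEq ▸ h1.2)
  set coef : (ZMod (l : ℕ))ˣ → ℚ :=
    fun u => (if u ∈ A then (1 : ℚ) else 0) - (if u ∈ B then (1 : ℚ) else 0) with hcoef
  have hsum : ∑ u ∈ A ∪ B, coef u • g u = 0 := by
    simp only [hcoef, sub_smul, ite_smul, one_smul, zero_smul]
    erw [Finset.sum_congr rfl fun x _ => sub_smul (R := ℚ) (M := CyclotomicField l ℚ) _ _ (g x)]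
    simp only [ite_smul, one_smul, zero_smul]
    rw [Finset.sum_sub_distrib, Finset.sum_ite_mem, Finset.sum_ite_mem,
      Finset.union_inter_cancel_left, Finset.union_inter_cancel_right,
      hsumA, hsumB, hc, sub_self]
  have := linearIndependent_iff'.mp (gauss_linearIndependent hl hζ) (A ∪ B) coef hsum
    c (Finset.mem_union_left _ hcA)
  rw [hcoef] at this
  simp only [hcA, hcB, if_true, if_false, sub_zero] at this
  exact one_ne_zero this

end Aux

/-- The field `ℚ(η)` generated by the Gauss period `η = η₁` (for a subgroup `H` of
order `f`) has degree `e = (λ - 1)/f` over `ℚ`. -/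
theorem finrank_adjoin_gaussPeriod (l : ℕ+) (hl : (l : ℕ).Prime)
    (ζ : CyclotomicField l ℚ) (hζ : IsPrimitiveRoot ζ l)
    (H : Subgroup (ZMod (l : ℕ))ˣ) [Fintype H] (f e : ℕ) (hf : Fintype.card H = f)
    (he : e = ((l : ℕ) - 1) / f) :
    Module.finrank ℚ (IntermediateField.adjoin ℚ {gaussPeriod l ζ H 1}) = e := by
  classical
  haveI : NeZero ((l : ℕ)) := ⟨l.ne_zero⟩
  haveI := Fact.mk hl
  haveI : IsCyclotomicExtension {(l : ℕ)} ℚ (CyclotomicField l ℚ) :=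
    CyclotomicField.isCyclotomicExtension _ _
  haveI : IsGalois ℚ (CyclotomicField l ℚ) :=
    IsCyclotomicExtension.isGalois {(l : ℕ)} ℚ (CyclotomicField l ℚ)
  haveI : FiniteDimensional ℚ (CyclotomicField l ℚ) :=
    IsCyclotomicExtension.finiteDimensional {(l : ℕ)} ℚ (CyclotomicField l ℚ)
  have hirr := Polynomial.cyclotomic.irreducible_rat l.pos
  set τ : (CyclotomicField l ℚ ≃ₐ[ℚ] CyclotomicField l ℚ) →* (ZMod (l : ℕ))ˣ := hζ.autToPow ℚ with hτ
  have hτbij : Function.Bijective τ := by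
    refine (Fintype.bijective_iff_injective_and_card τ).2
      ⟨hζ.autToPow_injective ℚ, ?_⟩
    rw [← Nat.card_eq_fintype_card, IsGalois.card_aut_eq_finrank, IsCyclotomicExtension.finrank (CyclotomicField l ℚ) hirr,
      ZMod.card_units_eq_totient]
  set H' : Subgroup (CyclotomicField l ℚ ≃ₐ[ℚ] CyclotomicField l ℚ) := H.comap τ with hH'
  set K' := IntermediateField.adjoin ℚ {gaussPeriod l ζ H 1} with hK'
  have hη : gaussPeriod l ζ H 1 ∈ K' :=
    IntermediateField.mem_adjoin_simple_self ℚ _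
  have h1 : K' ≤ IntermediateField.fixedField H' := by
    rw [hK', IntermediateField.adjoin_le_iff]
    rintro x hx
    rw [Set.mem_singleton_iff] at hx
    subst hx
    intro σ
    show σ.1 • gaussPeriod l ζ H 1 = gaussPeriod l ζ H 1
    rw [AlgEquiv.smul_def, gaussPeriod_aut hζ σ.1 1, mul_one]
    exact gaussPeriod_eq_one_of_mem σ.2
  have h2 : H' ≤ K'.fixingSubgroup := (IntermediateField.le_iff_le _ _).mp h1
  have h3 : K'.fixingSubgroup ≤ H' := by
    intro σ hσ
    rw [IntermediateField.mem_fixingSubgroup_iff] at hσ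
    have hfix := hσ _ hη
    rw [gaussPeriod_aut hζ σ 1, mul_one] at hfix
    exact mem_of_gaussPeriod_eq hl hζ hfix
  have hfixeq : K'.fixingSubgroup = H' := le_antisymm h3 h2
  have hcardH' : Fintype.card H' = f := by
    rw [← hf]
    have hmapeq : H' = Subgroup.map (MulEquiv.ofBijective τ hτbij).symm.toMonoidHom H := by
      ext σ
      simp only [hH', Subgroup.mem_comap, Subgroup.mem_map, MulEquiv.coe_toMonoidHom]
      constructor
      · intro hσ
        exact ⟨τ σ, hσ, (MulEquiv.ofBijective τ hτbij).symm_apply_apply σ⟩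
      · rintro ⟨y, hy, rfl⟩
        have hy2 : τ ((MulEquiv.ofBijective τ hτbij).symm y) = y :=
          (MulEquiv.ofBijective τ hτbij).apply_symm_apply y
        rw [hy2]
        exact hy
    rw [hmapeq]
    exact (Fintype.card_congr (H.equivMapOfInjective _
      (MulEquiv.ofBijective τ hτbij).symm.injective).toEquiv).symm
  have hce : Fintype.card K'.fixingSubgroup = Fintype.card H' :=
    Fintype.card_congr (Equiv.subtypeEquivRight fun x => by rw [hfixeq])
  have hrank : Module.finrank K' (CyclotomicField l ℚ) = f := by
    rw [← IsGalois.card_fixingSubgroup_eq_finrank (F := ℚ) (E := CyclotomicField l ℚ) K', Nat.card_eq_fintype_card, hce, hcardH']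
  have hto : Module.finrank ℚ (CyclotomicField l ℚ) = (l : ℕ) - 1 := by
    rw [IsCyclotomicExtension.finrank (CyclotomicField l ℚ) hirr, Nat.totient_prime hl]
  have hmul : Module.finrank ℚ K' * Module.finrank K' (CyclotomicField l ℚ) = (l : ℕ) - 1 := by
    rw [Module.finrank_mul_finrank ℚ K' (CyclotomicField l ℚ)]
    exact hto
  have hf0 : 0 < f := hf ▸ Fintype.card_pos
  rw [he, ← hmul, hrank, Nat.mul_div_cancel _ hf0]
end

section
/- Let λ and q be distinct primes, let H be the cyclic subgroup of (ℤ/λℤ)ˣ generated by the class of q, of order f, and let η = Σ_{h ∈ H} ζ^h be the corresponding Gauss period (an algebraic integer whose minimal polynomial over ℤ is monic of degree e = (λ−1)/f). Then the reduction modulo q of the minimal polynomial of η over ℤ splits into linear factors over the field ℤ/qℤ. -/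
open scoped BigOperators

open Polynomial

set_option maxHeartbeats 1000000
set_option synthInstance.maxHeartbeats 200000


/-- In a field of characteristic `q`, any Frobenius-fixed point lies in the prime field. -/
lemma frobFixed_mem_range {q : ℕ} [hq : Fact q.Prime] {F : Type*} [Field F] [CharP F q]
    (x : F) (hx : x ^ q = x) : x ∈ Set.range (ZMod.castHom (dvd_refl q) F) := by
  classical
  set φ := ZMod.castHom (dvd_refl q) F with hφ
  have hφinj : Function.Injective φ := φ.injective
  set p' : F[X] := X ^ q - X with hp'
  have h2 : 2 ≤ q := hq.out.two_le
  have hdeg : p'.degree = q := by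
    rw [hp', degree_sub_eq_left_of_degree_lt (by rw [degree_X_pow, degree_X]; exact_mod_cast h2.trans_lt' one_lt_two), degree_X_pow]
  have hp'ne : p' ≠ 0 := fun h => by simp [h] at hdeg
  have hroot : ∀ a : ZMod q, (φ a) ^ q - (φ a) = 0 := by
    intro a
    rw [← map_pow, ZMod.pow_card, sub_self]
  have hcard : Multiset.card p'.roots ≤ q := by
    have := Polynomial.card_roots hp'ne
    rw [hdeg] at this
    exact_mod_cast this
  set s : Finset F := Finset.univ.image φ with hs
  have hscard : s.card = q := by
    rw [hs, Finset.card_image_of_injective _ hφinj, Finset.card_univ, ZMod.card]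
  have hsub : s ⊆ p'.roots.toFinset := by
    intro y hy
    obtain ⟨a, _, rfl⟩ := Finset.mem_image.mp hy
    rw [Multiset.mem_toFinset, mem_roots hp'ne]
    simp [hp', IsRoot, hroot a]
  have heq : s = p'.roots.toFinset := by
    refine Finset.eq_of_subset_of_card_le hsub ?_
    calc p'.roots.toFinset.card ≤ Multiset.card p'.roots := Multiset.toFinset_card_le _
    _ ≤ q := hcard
    _ = s.card := hscard.symm
  have hxroot : x ∈ p'.roots.toFinset := by
    rw [Multiset.mem_toFinset, mem_roots hp'ne]
    simp [hp', IsRoot, hx]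
  rw [← heq] at hxroot
  obtain ⟨a, _, ha⟩ := Finset.mem_image.mp hxroot
  exact ⟨a, ha⟩

/-- A rational prime is not a unit in the integral closure of `ℤ` in a `ℚ`-algebra field. -/
lemma prime_not_unit_in_integralClosure {q : ℕ} (hq : q.Prime) {K : Type*} [Field K]
    [Algebra ℚ K] : ¬ IsUnit ((q : ℕ) : integralClosure ℤ K) := by
  intro h
  obtain ⟨v, hv⟩ := h.exists_right_inv
  have hK : ((q : ℕ) : K) * (v : K) = 1 := by
    have := congrArg (fun x : integralClosure ℤ K => (x : K)) hv
    push_cast at this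
    exact this
  have hq0 : ((q : ℕ) : K) ≠ 0 := by
    rw [← map_natCast (algebraMap ℚ K) q]
    simp only [ne_eq, _root_.map_eq_zero]
    exact Nat.cast_ne_zero.mpr hq.ne_zero
  have hvK : (v : K) = algebraMap ℚ K ((q : ℚ)⁻¹) := by
    rw [map_inv₀, map_natCast]
    exact eq_inv_of_mul_eq_one_left (by rw [mul_comm]; exact hK)
  have hvint : IsIntegral ℤ ((v : K)) := v.2
  rw [hvK] at hvint
  have hint : IsIntegral ℤ ((q : ℚ)⁻¹) :=
    (isIntegral_algebraMap_iff (algebraMap ℚ K).injective).mp hvint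
  obtain ⟨z, hz⟩ := IsIntegrallyClosed.isIntegral_iff.mp hint
  have hzq : (q : ℚ) * (z : ℚ) = 1 := by
    rw [show ((z : ℤ) : ℚ) = algebraMap ℤ ℚ z from rfl, hz]
    have : ((q:ℚ)) ≠ 0 := Nat.cast_ne_zero.mpr hq.ne_zero
    field_simp
  have hzint : (q : ℤ) * z = 1 := by exact_mod_cast hzq
  have := Int.isUnit_iff.mp (IsUnit.of_mul_eq_one _ hzint)
  have h2 := hq.two_le
  omega


/-- For distinct primes `λ` and `q`, with `H` the subgroup generated by the class of `q`
modulo `λ`, the reduction modulo `q` of the minimal polynomial over `ℤ` of the Gauss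
period `η = ∑_{h ∈ H} ζ^h` splits into linear factors over `ℤ/qℤ`. -/
theorem minpoly_gaussPeriod_splits_mod (l : ℕ+) (hl : (l : ℕ).Prime)
    (q : ℕ) [hq : Fact q.Prime] (hql : q ≠ (l : ℕ))
    (ζ : CyclotomicField l ℚ) (hζ : IsPrimitiveRoot ζ l)
    (u : (ZMod (l : ℕ))ˣ) (hu : (u : ZMod (l : ℕ)) = (q : ZMod (l : ℕ)))
    (H : Subgroup (ZMod (l : ℕ))ˣ) [Fintype H] (hH : H = Subgroup.zpowers u)
    (f e : ℕ) (hf : orderOf u = f) (he : e = ((l : ℕ) - 1) / f) :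
    Polynomial.Splits
      ((minpoly ℤ (gaussPeriod l ζ H 1)).map (Int.castRingHom (ZMod q))) := by
  classical
  haveI : NeZero (l : ℕ) := ⟨l.pos.ne'⟩
  -- K := CyclotomicField l ℚ
  -- basic facts about ζ
  have hζl : ζ ^ (l : ℕ) = 1 := hζ.pow_eq_one
  have hpowcast : ∀ m n : ℕ, ((m : ZMod (l : ℕ)) = (n : ZMod (l : ℕ))) → ζ ^ m = ζ ^ n := by
    intro m n hmn
    have hmod : m % (l : ℕ) = n % (l : ℕ) := by
      rwa [ZMod.natCast_eq_natCast_iff, Nat.ModEq] at hmn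
    have key : ∀ k : ℕ, ζ ^ k = ζ ^ (k % (l : ℕ)) := by
      intro k
      conv_lhs => rw [← Nat.div_add_mod k (l : ℕ)]
      rw [pow_add, pow_mul, hζl, one_pow, one_mul]
    rw [key m, key n, hmod]
  have hζint : IsIntegral ℤ ζ := by
    refine ⟨X ^ (l : ℕ) - C 1, monic_X_pow_sub_C 1 l.pos.ne', ?_⟩
    simp [hζl]
  -- the integral closure and integral Gauss periods
  set O := integralClosure ℤ (CyclotomicField l ℚ) with hO
  set ζO : O := ⟨ζ, hζint⟩ with hζO
  set g' : (ZMod (l : ℕ))ˣ → O := fun c =>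
    ∑ h : H, ζO ^ (((c * (h : (ZMod (l : ℕ))ˣ) : (ZMod (l : ℕ))ˣ) : ZMod (l : ℕ)).val)
    with hg'
  have hg'coe : ∀ c, ((g' c : O) : CyclotomicField l ℚ) = gaussPeriod l ζ H c := by
    intro c
    rw [hg', gaussPeriod]
    push_cast
    rfl
  have hζOcast : ∀ m n : ℕ, ((m : ZMod (l : ℕ)) = (n : ZMod (l : ℕ))) → ζO ^ m = ζO ^ n := by
    intro m n hmn
    have := hpowcast m n hmn
    exact Subtype.ext (by push_cast; exact this)
  have hginv : ∀ (c h0 : (ZMod (l : ℕ))ˣ), h0 ∈ H → g' (c * h0) = g' c := by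
    intro c h0 hh0
    rw [hg']
    refine Fintype.sum_equiv (Equiv.mulLeft (⟨h0, hh0⟩ : H)) _ _ fun h => ?_
    congr 2
    simp [mul_assoc]
  -- Galois theory: the product over all conjugate periods has rational coefficients
  haveI : NeZero ((l : ℕ) : ℚ) := ⟨by exact_mod_cast l.pos.ne'⟩
  haveI hGal : IsGalois ℚ (CyclotomicField l ℚ) :=
    @IsCyclotomicExtension.isGalois {(l : ℕ)} ℚ (CyclotomicField l ℚ) _ _ _ (CyclotomicField.isCyclotomicExtension (l : ℕ) ℚ)
  haveI hFD : FiniteDimensional ℚ (CyclotomicField l ℚ) :=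
    @IsCyclotomicExtension.finiteDimensional {(l : ℕ)} ℚ _ (CyclotomicField l ℚ) _ _ _ _ (CyclotomicField.isCyclotomicExtension (l : ℕ) ℚ)
  set NK : (CyclotomicField l ℚ)[X] :=
    ∏ c : (ZMod (l : ℕ))ˣ, (X - C (gaussPeriod l ζ H c)) with hNK
  have hσg : ∀ σ : (CyclotomicField l ℚ) ≃ₐ[ℚ] (CyclotomicField l ℚ), ∀ c,
      σ (gaussPeriod l ζ H c) = gaussPeriod l ζ H ((hζ.autToPow ℚ σ) * c) := by
    intro σ c
    rw [gaussPeriod, map_sum]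
    refine Finset.sum_congr rfl fun h _ => ?_
    rw [map_pow, ← hζ.autToPow_spec ℚ σ, ← pow_mul]
    refine hpowcast _ _ ?_
    push_cast [ZMod.natCast_val, ZMod.cast_id]
    ring
  have hNfix : ∀ σ : (CyclotomicField l ℚ) ≃ₐ[ℚ] (CyclotomicField l ℚ),
      NK.map (σ : CyclotomicField l ℚ →+* CyclotomicField l ℚ) = NK := by
    intro σ
    rw [hNK, Polynomial.map_prod]
    simp only [Polynomial.map_sub, map_X, map_C]
    calc ∏ c : (ZMod (l : ℕ))ˣ, (X - C (σ (gaussPeriod l ζ H c)))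
        = ∏ c : (ZMod (l : ℕ))ˣ, (X - C (gaussPeriod l ζ H ((hζ.autToPow ℚ σ) * c))) := by
          refine Finset.prod_congr rfl fun c _ => ?_
          rw [hσg σ c]
      _ = ∏ c : (ZMod (l : ℕ))ˣ, (X - C (gaussPeriod l ζ H c)) :=
          Fintype.prod_equiv (Equiv.mulLeft (hζ.autToPow ℚ σ)) _ _ (fun c => rfl)
  -- integral version of NK
  set NO : (↥O)[X] := ∏ c : (ZMod (l : ℕ))ˣ, (X - C (g' c)) with hNO
  have hOKinj : Function.Injective (algebraMap (↥O) (CyclotomicField l ℚ)) :=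
    fun a b hab => Subtype.ext hab
  have hNKO : NK = NO.map (algebraMap (↥O) (CyclotomicField l ℚ)) := by
    rw [hNO, Polynomial.map_prod, hNK]
    refine Finset.prod_congr rfl fun c _ => ?_
    rw [Polynomial.map_sub, map_X, map_C]
    congr 1
    rw [← hg'coe c]
    rfl
  -- each coefficient of NK comes from ℤ
  have hcoeff : ∀ n, NK.coeff n ∈ Set.range (algebraMap ℤ (CyclotomicField l ℚ)) := by
    intro n
    have hfix : ∀ σ : (CyclotomicField l ℚ) ≃ₐ[ℚ] (CyclotomicField l ℚ),
        σ (NK.coeff n) = NK.coeff n := by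
      intro σ
      conv_rhs => rw [← hNfix σ]
      rw [coeff_map]
      rfl
    have hbot : NK.coeff n ∈ (⊥ : IntermediateField ℚ (CyclotomicField l ℚ)) := by
      have h1 : IntermediateField.fixedField
          (⊤ : Subgroup ((CyclotomicField l ℚ) ≃ₐ[ℚ] (CyclotomicField l ℚ))) = ⊥ :=
        OrderIso.map_bot (IsGalois.intermediateFieldEquivSubgroup).symm
      rw [← h1]
      exact fun σ => hfix σ
    obtain ⟨b, hb⟩ := IntermediateField.mem_bot.mp hbot
    have hint : IsIntegral ℤ (NK.coeff n) := by
      rw [hNKO, coeff_map]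
      exact (NO.coeff n).2
    have hbint : IsIntegral ℤ b := by
      refine (isIntegral_algebraMap_iff (algebraMap ℚ (CyclotomicField l ℚ)).injective).mp ?_
      rw [hb]; exact hint
    obtain ⟨z, hz⟩ := IsIntegrallyClosed.isIntegral_iff.mp hbint
    refine ⟨z, ?_⟩
    rw [IsScalarTower.algebraMap_apply ℤ ℚ (CyclotomicField l ℚ), hz, hb]
  obtain ⟨N₀, hN₀⟩ := (Polynomial.mem_lifts _).mp
    ((Polynomial.lifts_iff_coeff_lifts NK).mpr hcoeff)
  have hN₀O : N₀.map (algebraMap ℤ (↥O)) = NO := by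
    apply Polynomial.map_injective (algebraMap (↥O) (CyclotomicField l ℚ)) hOKinj
    rw [Polynomial.map_map, ← IsScalarTower.algebraMap_eq ℤ (↥O) (CyclotomicField l ℚ),
      hN₀, hNKO]
  -- the Gauss period is a root of N₀
  have haev : Polynomial.aeval (gaussPeriod l ζ H 1) N₀ = 0 := by
    rw [aeval_def, Polynomial.eval₂_eq_eval_map, hN₀, hNK, eval_prod]
    refine Finset.prod_eq_zero (Finset.mem_univ (1 : (ZMod (l : ℕ))ˣ)) ?_
    simp
  have hηint : IsIntegral ℤ (gaussPeriod l ζ H 1) := by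
    rw [← hg'coe 1]; exact (g' 1).2
  have hdvd : minpoly ℤ (gaussPeriod l ζ H 1) ∣ N₀ :=
    minpoly.isIntegrallyClosed_dvd hηint haev
  -- a maximal ideal above q
  have hqnu : ¬ IsUnit ((q : ℕ) : ↥O) := prime_not_unit_in_integralClosure hq.out
  obtain ⟨Q, hQmax, hQle⟩ := Ideal.exists_le_maximal (Ideal.span {((q : ℕ) : ↥O)})
    (by rw [Ne, Ideal.span_singleton_eq_top]; exact hqnu)
  haveI := hQmax
  letI : Field (↥O ⧸ Q) := Ideal.Quotient.field Q
  set π : ↥O →+* (↥O ⧸ Q) := Ideal.Quotient.mk Q with hπ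
  have hqF : ((q : ℕ) : ↥O ⧸ Q) = 0 := by
    have h0 : π ((q : ℕ) : ↥O) = 0 :=
      Ideal.Quotient.eq_zero_iff_mem.mpr (hQle (Ideal.mem_span_singleton_self _))
    rwa [map_natCast] at h0
  haveI hchar : CharP (↥O ⧸ Q) q := (CharP.charP_iff_prime_eq_zero hq.out).mpr hqF
  haveI : ExpChar (↥O ⧸ Q) q := ExpChar.prime hq.out
  -- Frobenius fixes the reduced Gauss periods
  have hfrob : ∀ c, (π (g' c)) ^ q = π (g' c) := by
    intro c
    have step1 : (π (g' c)) ^ q = π (g' (c * u)) := by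
      rw [hg']
      simp only [map_sum]
      rw [sum_pow_char]
      refine Finset.sum_congr rfl fun h _ => ?_
      rw [← map_pow, ← pow_mul]
      congr 1
      refine hζOcast _ _ ?_
      push_cast [ZMod.natCast_val, ZMod.cast_id]
      rw [← hu]
      ring
    rw [step1, hginv c u (by rw [hH]; exact Subgroup.mem_zpowers u)]
  have hmem : ∀ c, π (g' c) ∈ Set.range (ZMod.castHom (dvd_refl q) (↥O ⧸ Q)) :=
    fun c => frobFixed_mem_range _ (hfrob c)
  choose b hb using hmem
  set φ : ZMod q →+* (↥O ⧸ Q) := ZMod.castHom (dvd_refl q) (↥O ⧸ Q) with hφ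
  have hφinj : Function.Injective φ := φ.injective
  -- the reduction of N₀ mod q splits into linear factors
  have hNbar : N₀.map (Int.castRingHom (ZMod q)) = ∏ c : (ZMod (l : ℕ))ˣ, (X - C (b c)) := by
    apply Polynomial.map_injective φ hφinj
    rw [Polynomial.map_map]
    have hcomp : φ.comp (Int.castRingHom (ZMod q)) = π.comp (algebraMap ℤ (↥O)) :=
      RingHom.ext_int _ _
    rw [hcomp, ← Polynomial.map_map, hN₀O, hNO, Polynomial.map_prod, Polynomial.map_prod]
    refine Finset.prod_congr rfl fun c _ => ?_
    rw [Polynomial.map_sub, Polynomial.map_sub, map_X, map_X, map_C, map_C, hb c]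
  have hsplits : Splits (N₀.map (Int.castRingHom (ZMod q))) := by
    rw [hNbar]; exact Splits.prod fun c _ => Splits.X_sub_C _
  have hne : N₀.map (Int.castRingHom (ZMod q)) ≠ 0 := by
    rw [hNbar]
    exact (monic_prod_of_monic _ _ fun c _ => monic_X_sub_C _).ne_zero
  exact hsplits.of_dvd hne (Polynomial.map_dvd _ hdvd)
end
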